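/- arXiv:1505.07551 — 2 statements merged into one kernel-verified Lean document; each statement's English description precedes it below -/
import Mathlib

section
/- For all indices μ > -1 and all 0 < x < y, the ratio of modified Bessel functions of the first kind satisfies the lower bound I_μ(y)/I_μ(x) > (x/y)^(μ+4) · e^(y−x). -/
open Real Filter

noncomputable def cc (μ : ℝ) (k : ℕ) : ℝ := 1 / (k.factorial * Real.Gamma (k + μ + 1))

lemma cc_pos {μ : ℝ} (hμ : -1 < μ) (k : ℕ) : 0 < cc μ k := by
  have h1 : (0:ℝ) < k.factorial := by positivity
  have h2 : 0 < Real.Gamma (k + μ + 1) :=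
    Real.Gamma_pos_of_pos (by have : (0:ℝ) ≤ k := Nat.cast_nonneg k; linarith)
  exact div_pos one_pos (by positivity)

lemma cc_rec {μ : ℝ} (hμ : -1 < μ) (k : ℕ) :
    cc μ k = ((k:ℝ)+1) * ((k:ℝ)+1+μ) * cc μ (k+1) := by
  have hk : (0:ℝ) ≤ k := Nat.cast_nonneg k
  have hpos : (0:ℝ) < (k:ℝ) + μ + 1 := by linarith
  have hG : Real.Gamma (((k:ℕ)+1 : ℕ) + μ + 1) = ((k:ℝ)+μ+1) * Real.Gamma ((k:ℝ) + μ + 1) := by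
    push_cast
    rw [show (k:ℝ) + 1 + μ + 1 = ((k:ℝ) + μ + 1) + 1 by ring, Real.Gamma_add_one (ne_of_gt hpos)]
  have hGpos : 0 < Real.Gamma ((k:ℝ) + μ + 1) := Real.Gamma_pos_of_pos hpos
  have hf : ((Nat.factorial (k+1)) : ℝ) = ((k:ℝ)+1) * k.factorial := by
    rw [Nat.factorial_succ]; push_cast; ring
  unfold cc
  rw [hG, hf]
  have h1 : (0:ℝ) < k.factorial := by positivity
  field_simp
  ring

lemma tendsto_aux (r s t : ℝ) (hs : 0 ≤ s) (ht : 0 ≤ t) :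
    Tendsto (fun n : ℕ => r / (((n:ℝ)+s) * ((n:ℝ)+t))) atTop (nhds 0) := by
  apply Tendsto.div_atTop (tendsto_const_nhds)
  apply Tendsto.atTop_mul_atTop₀
  · exact tendsto_atTop_add_const_right _ s tendsto_natCast_atTop_atTop
  · exact tendsto_atTop_add_const_right _ t tendsto_natCast_atTop_atTop

lemma summable_cc {μ : ℝ} (hμ : -1 < μ) {r : ℝ} (hr : 0 < r) :
    Summable (fun k => cc μ k * r ^ k) := by
  apply summable_of_ratio_test_tendsto_lt_one (l := 0) one_pos
  · filter_upwards with n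
    have := cc_pos hμ n
    exact ne_of_gt (by positivity)
  · have heq : (fun n : ℕ => ‖cc μ (n+1) * r ^ (n+1)‖ / ‖cc μ n * r ^ n‖)
        = fun n : ℕ => r / (((n:ℝ)+1) * ((n:ℝ)+(1+μ))) := by
      funext n
      have hc : 0 < cc μ (n+1) := cc_pos hμ (n+1)
      have hcn : 0 < cc μ n := cc_pos hμ n
      have h1 : 0 < cc μ n * r ^ n := by positivity
      have h2 : 0 < cc μ (n+1) * r ^ (n+1) := by positivity
      have hn1 : (0:ℝ) < (n:ℝ) + 1 := by positivity
      have hn2 : (0:ℝ) < (n:ℝ) + (1 + μ) := by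
        have : (0:ℝ) ≤ n := Nat.cast_nonneg n; linarith
      rw [Real.norm_of_nonneg h1.le, Real.norm_of_nonneg h2.le]
      have hd1 : (0:ℝ) < ((n:ℝ)+1) * ((n:ℝ)+1+μ) * cc μ (n+1) * r ^ n := by
        have : (0:ℝ) < (n:ℝ)+1+μ := by linarith [Nat.cast_nonneg (α := ℝ) n]
        positivity
      have hd2 : (0:ℝ) < ((n:ℝ)+1) * ((n:ℝ)+(1+μ)) := mul_pos hn1 hn2
      rw [cc_rec hμ n, pow_succ, div_eq_div_iff hd1.ne' hd2.ne']
      ring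
    rw [heq]
    exact tendsto_aux r 1 (1+μ) zero_le_one (by linarith)

lemma summable_cc' {μ : ℝ} (hμ : -1 < μ) {r : ℝ} (hr : 0 < r) :
    Summable (fun k : ℕ => ((k:ℝ)+1+μ) * cc μ (k+1) * r ^ k) := by
  refine Summable.of_nonneg_of_le ?_ ?_ (summable_cc hμ hr)
  · intro k
    have h0 : (0:ℝ) < (k:ℝ)+1+μ := by linarith [Nat.cast_nonneg (α := ℝ) k]
    have h1 := cc_pos hμ (k+1)
    positivity
  · intro k
    have h := cc_rec hμ k
    have hk1 : (1:ℝ) ≤ (k:ℝ)+1 := by have : (0:ℝ) ≤ k := Nat.cast_nonneg k; linarith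
    have hc : 0 < cc μ (k+1) := cc_pos hμ (k+1)
    have hb : ((k:ℝ)+1+μ) * cc μ (k+1) ≤ cc μ k := by
      rw [h]
      have hp : (0:ℝ) < (k:ℝ)+1+μ := by
        have : (0:ℝ) ≤ k := Nat.cast_nonneg k
        linarith
      have hnn : 0 ≤ ((k:ℝ)+1+μ) * cc μ (k+1) := by positivity
      nlinarith
    exact mul_le_mul_of_nonneg_right hb (by positivity)

lemma deriv_bound {μ : ℝ} (hμ : -1 < μ) {m : ℕ} (hm1 : 1 ≤ m) (hm2 : μ + 1 ≤ 2*(m:ℝ))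
    {b w : ℝ} (hw : 0 ≤ w) (hwb : w ≤ b) (N : ℕ) :
    -(((N:ℝ)+1+μ) * cc μ (N+1) * b ^ (2*(N+1+m)-1)) ≤
      (∑ k ∈ Finset.range (N+1), cc μ k * ((2*(k+m) : ℕ) : ℝ) * w ^ (2*(k+m)-1))
      - 2 * ∑ k ∈ Finset.range (N+1), cc μ k * w ^ (2*(k+m)) := by
  set T : ℕ → ℝ := fun k => if k = 0 then 0 else ((k:ℝ)+μ) * cc μ k * w ^ (2*(k+m)-1) with hT
  have hstep : ∀ k : ℕ, T k - T (k+1) ≤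
      cc μ k * ((2*(k+m) : ℕ) : ℝ) * w ^ (2*(k+m)-1) - 2 * (cc μ k * w ^ (2*(k+m))) := by
    intro k
    have hcp := cc_pos hμ k
    have hcq := cc_pos hμ (k+1)
    have hK : (0:ℝ) < (k:ℝ)+1 := by positivity
    have hknn : (0:ℝ) ≤ (k:ℝ) := Nat.cast_nonneg k
    have hkμ : (0:ℝ) < (k:ℝ)+1+μ := by linarith
    obtain ⟨n, hn⟩ : ∃ n, 2*(k+m) = n+1 := ⟨2*(k+m)-1, by omega⟩
    have hn1 : 2*(k+m)-1 = n := by omega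
    have hn2 : 2*(k+1+m)-1 = n+2 := by omega
    have hnr : (n:ℝ) = 2*(k:ℝ)+2*(m:ℝ)-1 := by
      have : ((2*(k+m):ℕ):ℝ) = ((n+1:ℕ):ℝ) := by rw [hn]
      push_cast at this
      linarith
    have hw' : (0:ℝ) ≤ w^n := pow_nonneg hw n
    have hTk1 : T (k+1) = (cc μ k / ((k:ℝ)+1)) * w^(n+2) := by
      have : T (k+1) = (((k+1:ℕ):ℝ)+μ) * cc μ (k+1) * w ^ (2*(k+1+m)-1) := by
        simp only [hT, if_neg (Nat.succ_ne_zero k)]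
      rw [this, hn2, cc_rec hμ k]
      push_cast
      field_simp
    have hTkb : T k ≤ ((n:ℝ) - (k:ℝ)) * cc μ k * w^n := by
      by_cases hk0 : k = 0
      · subst hk0
        simp only [hT, if_pos rfl, Nat.cast_zero, sub_zero]
        have hnn : (0:ℝ) ≤ (n:ℝ) := Nat.cast_nonneg n
        positivity
      · simp only [hT, if_neg hk0, hn1]
        have hco : (k:ℝ)+μ ≤ (n:ℝ)-(k:ℝ) := by rw [hnr]; linarith
        exact mul_le_mul_of_nonneg_right (mul_le_mul_of_nonneg_right hco hcp.le) hw'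
    have e1 : w^(n+1) = w^n * w := pow_succ w n
    have e2 : w^(n+2) = w^n * (w*w) := by ring
    have key0 : (0:ℝ) ≤ cc μ k * w^n / ((k:ℝ)+1) * (((k:ℝ)+1) - w)^2 := by positivity
    have expand : cc μ k * ((n:ℝ)+1) * w^n - 2*(cc μ k * w^(n+1))
        - (((n:ℝ)-(k:ℝ))*cc μ k*w^n - (cc μ k/((k:ℝ)+1))*w^(n+2))
        = cc μ k * w^n / ((k:ℝ)+1) * (((k:ℝ)+1) - w)^2 := by
      rw [e1, e2]
      field_simp
      ring
    rw [hn1, hn, hTk1]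
    push_cast
    linarith [key0, expand, hTkb]
  have hsum := Finset.sum_le_sum (fun k (_ : k ∈ Finset.range (N+1)) => hstep k)
  rw [Finset.sum_range_sub' T (N+1)] at hsum
  have hT0 : T 0 = 0 := by simp [hT]
  have hTN : T (N+1) ≤ ((N:ℝ)+1+μ) * cc μ (N+1) * b ^ (2*(N+1+m)-1) := by
    have : T (N+1) = (((N+1:ℕ):ℝ)+μ) * cc μ (N+1) * w ^ (2*(N+1+m)-1) := by
      simp only [hT, if_neg (Nat.succ_ne_zero N)]
    rw [this]
    push_cast
    have hco : (0:ℝ) ≤ ((N:ℝ)+1+μ) * cc μ (N+1) :=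
      mul_nonneg (by linarith [Nat.cast_nonneg (α := ℝ) N]) (cc_pos hμ (N+1)).le
    exact mul_le_mul_of_nonneg_left (pow_le_pow_left₀ hw hwb _) hco
  have hdist : ∑ k ∈ Finset.range (N+1),
      (cc μ k * ((2*(k+m) : ℕ) : ℝ) * w ^ (2*(k+m)-1) - 2 * (cc μ k * w ^ (2*(k+m))))
      = (∑ k ∈ Finset.range (N+1), cc μ k * ((2*(k+m) : ℕ) : ℝ) * w ^ (2*(k+m)-1))
      - 2 * ∑ k ∈ Finset.range (N+1), cc μ k * w ^ (2*(k+m)) := by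
    rw [Finset.sum_sub_distrib, Finset.mul_sum]
  rw [hdist] at hsum
  linarith [hsum, hTN]

lemma summable_w {μ : ℝ} (hμ : -1 < μ) (m : ℕ) {w : ℝ} (hw : 0 < w) :
    Summable (fun k : ℕ => cc μ k * w ^ (2*(k+m))) := by
  have h := (summable_cc hμ (r := w^2) (by positivity)).mul_left (w^(2*m))
  apply h.congr
  intro k
  rw [show 2*(k+m) = 2*m + 2*k by ring, pow_add, pow_mul]
  ring

lemma mono_aux {μ : ℝ} (hμ : -1 < μ) {m : ℕ} (hm1 : 1 ≤ m) (hm2 : μ + 1 ≤ 2*(m:ℝ))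
    {a b : ℝ} (ha : 0 < a) (hab : a ≤ b) :
    (∑' k : ℕ, cc μ k * a ^ (2*(k+m))) * Real.exp (-2*a) ≤
    (∑' k : ℕ, cc μ k * b ^ (2*(k+m))) * Real.exp (-2*b) := by
  have hb : 0 < b := lt_of_lt_of_le ha hab
  set ε : ℕ → ℝ := fun N => ((N:ℝ)+1+μ) * cc μ (N+1) * b ^ (2*(N+1+m)-1) with hε
  have hε0 : ∀ N, 0 ≤ ε N := by
    intro N
    have h1 : (0:ℝ) < (N:ℝ)+1+μ := by linarith [Nat.cast_nonneg (α := ℝ) N]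
    have h2 := cc_pos hμ (N+1)
    positivity
  have hεlim : Tendsto ε atTop (nhds 0) := by
    have h := (summable_cc' hμ (r := b^2) (by positivity)).tendsto_atTop_zero
    have h2 := h.const_mul (b^(2*m+1))
    rw [mul_zero] at h2
    apply h2.congr
    intro N
    simp only [hε]
    rw [show 2*(N+1+m)-1 = 2*m+1 + 2*N by omega, pow_add, pow_mul]
    ring
  have key : ∀ N : ℕ,
      (∑ k ∈ Finset.range (N+1), cc μ k * a^(2*(k+m))) * Real.exp (-2*a)
      ≤ (∑ k ∈ Finset.range (N+1), cc μ k * b^(2*(k+m))) * Real.exp (-2*b) + ε N * b := by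
    intro N
    set F : ℝ → ℝ := fun w =>
      (∑ k ∈ Finset.range (N+1), cc μ k * w^(2*(k+m))) * Real.exp (-2*w) + ε N * w with hF
    have hder : ∀ w : ℝ, HasDerivAt F
        ((∑ k ∈ Finset.range (N+1), cc μ k * (((2*(k+m):ℕ):ℝ) * w^(2*(k+m)-1))) * Real.exp (-2*w)
          + (∑ k ∈ Finset.range (N+1), cc μ k * w^(2*(k+m))) * (Real.exp (-2*w) * (-2)) + ε N) w := by
      intro w
      have hP : HasDerivAt (fun w : ℝ => ∑ k ∈ Finset.range (N+1), cc μ k * w^(2*(k+m)))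
          (∑ k ∈ Finset.range (N+1), cc μ k * (((2*(k+m):ℕ):ℝ) * w^(2*(k+m)-1))) w := by
        apply HasDerivAt.fun_sum
        intro k _
        exact (hasDerivAt_pow (2*(k+m)) w).const_mul (cc μ k)
      have h1 : HasDerivAt (fun w : ℝ => -2*w) (-2) w := by
        simpa using (hasDerivAt_id w).const_mul (-2:ℝ)
      have hE : HasDerivAt (fun w : ℝ => Real.exp (-2*w)) (Real.exp (-2*w) * (-2)) w := h1.exp
      have hlin : HasDerivAt (fun w : ℝ => ε N * w) (ε N) w := by
        simpa using (hasDerivAt_id w).const_mul (ε N)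
      exact (hP.mul hE).add hlin
    have hdiff : Differentiable ℝ F := fun w => (hder w).differentiableAt
    have hmono : MonotoneOn F (Set.Icc 0 b) := by
      apply monotoneOn_of_deriv_nonneg (convex_Icc 0 b) hdiff.continuous.continuousOn
        (fun w _ => (hdiff w).differentiableWithinAt)
      intro w hwI
      rw [interior_Icc] at hwI
      rw [(hder w).deriv]
      have hw0 : (0:ℝ) ≤ w := hwI.1.le
      have hwb : w ≤ b := hwI.2.le
      have hdb := deriv_bound hμ hm1 hm2 hw0 hwb N
      have hexp1 : Real.exp (-2*w) ≤ 1 := by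
        rw [Real.exp_le_one_iff]
        linarith
      have hexp0 : (0:ℝ) < Real.exp (-2*w) := Real.exp_pos _
      have hsumeq : ∑ k ∈ Finset.range (N+1), cc μ k * (((2*(k+m):ℕ):ℝ) * w^(2*(k+m)-1))
          = ∑ k ∈ Finset.range (N+1), cc μ k * ((2*(k+m):ℕ):ℝ) * w^(2*(k+m)-1) := by
        apply Finset.sum_congr rfl
        intro k _
        ring
      rw [hsumeq]
      have hdb' : -(ε N) ≤ (∑ k ∈ Finset.range (N+1), cc μ k * ((2*(k+m):ℕ):ℝ) * w^(2*(k+m)-1))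
          - 2 * ∑ k ∈ Finset.range (N+1), cc μ k * w^(2*(k+m)) := hdb
      have h1 := mul_le_mul_of_nonneg_left hdb' hexp0.le
      have h2 : 0 ≤ ε N * (1 - Real.exp (-2*w)) :=
        mul_nonneg (hε0 N) (by linarith)
      set P1 := ∑ k ∈ Finset.range (N+1), cc μ k * ((2*(k+m):ℕ):ℝ) * w^(2*(k+m)-1)
      set P2 := ∑ k ∈ Finset.range (N+1), cc μ k * w^(2*(k+m))
      linarith [h1, h2]
    have hFab := hmono (Set.mem_Icc.mpr ⟨ha.le, hab⟩) (Set.mem_Icc.mpr ⟨hb.le, le_refl b⟩) hab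
    simp only [hF] at hFab
    have hεa : 0 ≤ ε N * a := mul_nonneg (hε0 N) ha.le
    linarith
  have hta : Tendsto (fun N => (∑ k ∈ Finset.range (N+1), cc μ k * a^(2*(k+m))) * Real.exp (-2*a))
      atTop (nhds ((∑' k : ℕ, cc μ k * a ^ (2*(k+m))) * Real.exp (-2*a))) := by
    have h1 := ((summable_w hμ m ha).hasSum.tendsto_sum_nat).comp (tendsto_add_atTop_nat 1)
    exact h1.mul_const _
  have htb : Tendsto (fun N => (∑ k ∈ Finset.range (N+1), cc μ k * b^(2*(k+m))) * Real.exp (-2*b) + ε N * b)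
      atTop (nhds ((∑' k : ℕ, cc μ k * b ^ (2*(k+m))) * Real.exp (-2*b))) := by
    have h1 := (((summable_w hμ m hb).hasSum.tendsto_sum_nat).comp (tendsto_add_atTop_nat 1)).mul_const (Real.exp (-2*b))
    have h2 := hεlim.mul_const b
    rw [zero_mul] at h2
    simpa using h1.add h2
  exact le_of_tendsto_of_tendsto' hta htb key

/-- Modified Bessel function of the first kind. -/
noncomputable def besselI (μ z : ℝ) : ℝ :=
  ∑' k : ℕ, (z / 2) ^ (μ + 2 * (k : ℝ)) / ((Nat.factorial k : ℝ) * Real.Gamma ((k : ℝ) + μ + 1))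

lemma besselI_eq (μ z : ℝ) (hz : 0 < z) :
    besselI μ z = (z/2) ^ μ * ∑' k : ℕ, cc μ k * ((z/2)^2)^k := by
  unfold besselI
  rw [← tsum_mul_left]
  apply tsum_congr
  intro k
  have h2 : (0:ℝ) < z/2 := by linarith
  rw [show μ + 2*(k:ℝ) = μ + ((2*k : ℕ):ℝ) by push_cast; ring, Real.rpow_add h2,
    Real.rpow_natCast, pow_mul]
  simp only [cc, div_eq_mul_inv, one_mul]
  ring

theorem besselI_ratio_lower (μ x y : ℝ) (hμ : -1 < μ) (hx : 0 < x) (hxy : x < y) :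
    (x / y) ^ (μ + 4) * Real.exp (y - x) < besselI μ y / besselI μ x := by
  have hy : 0 < y := lt_trans hx hxy
  have hp : 0 < x/2 := by linarith
  have hq : 0 < y/2 := by linarith
  have hpq : x/2 ≤ y/2 := by linarith
  set m : ℕ := ⌈(μ+1)/2⌉₊ with hm
  have hm1 : 1 ≤ m := Nat.one_le_ceil_iff.mpr (by linarith)
  have hm2 : μ + 1 ≤ 2*(m:ℝ) := by
    have := Nat.le_ceil ((μ+1)/2)
    rw [← hm] at this
    linarith
  have hm3 : 2*(m:ℝ) < 2*μ + 4 := by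
    have := Nat.ceil_lt_add_one (show (0:ℝ) ≤ (μ+1)/2 by linarith)
    rw [← hm] at this
    linarith
  have hSx : Summable (fun k : ℕ => cc μ k * ((x/2)^2)^k) := summable_cc hμ (by positivity)
  have hSy : Summable (fun k : ℕ => cc μ k * ((y/2)^2)^k) := summable_cc hμ (by positivity)
  set Sx := ∑' k : ℕ, cc μ k * ((x/2)^2)^k with hSxd
  set Sy := ∑' k : ℕ, cc μ k * ((y/2)^2)^k with hSyd
  have hSxpos : 0 < Sx := by
    apply Summable.tsum_pos hSx (fun k => ?_) 0
    · have := cc_pos hμ 0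
      positivity
    · have := cc_pos hμ k
      positivity
  have H := mono_aux hμ hm1 hm2 hp hpq
  have hrw : ∀ w : ℝ, (∑' k : ℕ, cc μ k * w^(2*(k+m))) = w^(2*m) * ∑' k : ℕ, cc μ k * (w^2)^k := by
    intro w
    rw [← tsum_mul_left]
    apply tsum_congr
    intro k
    rw [show 2*(k+m) = 2*m+2*k by ring, pow_add, pow_mul]
    ring
  rw [hrw, hrw, show -2*(x/2) = -x by ring, show -2*(y/2) = -y by ring, ← hSxd, ← hSyd] at H
  have hxy1 : x/y < 1 := (div_lt_one hy).mpr hxy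
  have hxy0 : 0 < x/y := div_pos hx hy
  have h2 : (x/y)^(2*m) * Real.exp (y-x) * Sx ≤ Sy := by
    have hq2m : (0:ℝ) < (y/2)^(2*m) := by positivity
    have hmul := mul_le_mul_of_nonneg_right H (le_of_lt (div_pos (Real.exp_pos y) hq2m))
    have hR : ((y/2)^(2*m) * Sy) * Real.exp (-y) * (Real.exp y / (y/2)^(2*m)) = Sy := by
      rw [Real.exp_neg]
      field_simp
    have hL : (x/y)^(2*m) * Real.exp (y-x) * Sx
        = ((x/2)^(2*m) * Sx) * Real.exp (-x) * (Real.exp y / (y/2)^(2*m)) := by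
      rw [Real.exp_sub, Real.exp_neg, div_pow, div_pow, div_pow]
      field_simp
    rw [hL, ← hR]
    exact hmul
  have h1 : (x/y)^(2*μ+4) < (x/y)^(((2*m:ℕ)):ℝ) :=
    Real.rpow_lt_rpow_of_exponent_gt hxy0 hxy1 (by push_cast; linarith)
  have key : (x/y)^(2*μ+4) * Real.exp (y-x) < Sy / Sx := by
    rw [lt_div_iff₀ hSxpos]
    calc (x/y)^(2*μ+4) * Real.exp (y-x) * Sx
        < (x/y)^(((2*m:ℕ)):ℝ) * Real.exp (y-x) * Sx := by
          exact mul_lt_mul_of_pos_right (mul_lt_mul_of_pos_right h1 (Real.exp_pos _)) hSxpos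
      _ = (x/y)^(2*m) * Real.exp (y-x) * Sx := by rw [Real.rpow_natCast]
      _ ≤ Sy := h2
  rw [besselI_eq μ y hy, besselI_eq μ x hx, ← hSxd, ← hSyd, ← div_mul_div_comm]
  have hqp : (y/2)^μ/((x/2):ℝ)^μ = (y/x)^μ := by
    rw [← Real.div_rpow hq.le hp.le]
    congr 1
    field_simp
  rw [hqp]
  have hyx0 : 0 < y/x := div_pos hy hx
  have hid : (x/y)^(μ+4) = (y/x)^μ * (x/y)^(2*μ+4) := by
    have e1 : (y/x)^μ = (x/y)^(-μ) := by
      rw [show y/x = (x/y)⁻¹ by rw [inv_div], Real.inv_rpow hxy0.le, Real.rpow_neg hxy0.le]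
    rw [e1, ← Real.rpow_add hxy0]
    congr 1
    ring
  rw [hid, mul_assoc]
  exact mul_lt_mul_of_pos_left key (Real.rpow_pos_of_pos hyx0 μ)
end

section
/- For every μ > -1, every t > 0, every x ∈ (0,1), and every y ∈ (1/2, 1), the ratio of transition densities satisfies ((y/(2−y))^{2μ+4}) · e^{−2(1−x)(1−y)/t} < p(t,x,2−y)/p(t,x,y) < ((2−y)/y)² · e^{−2(1−x)(1−y)/t}, where p(t,x,y) = (1/(2t))(xy)^{−μ} exp(−(x²+y²)/(2t)) I_μ(xy/t). -/
open Real

/-- Transition density (w.r.t. the speed measure) of the reflected Bessel process. -/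
noncomputable def besselDensity (μ t a b : ℝ) : ℝ :=
  (1 / (2 * t)) * (a * b) ^ (-μ) * Real.exp (-(a ^ 2 + b ^ 2) / (2 * t)) * besselI μ (a * b / t)

namespace BesselAux

/-- series coefficients -/
noncomputable def c (μ : ℝ) (k : ℕ) : ℝ := 1 / (k.factorial * Real.Gamma ((k : ℝ) + μ + 1))

lemma arg_pos {μ : ℝ} (hμ : -1 < μ) (k : ℕ) : 0 < (k : ℝ) + μ + 1 := by
  have : (0:ℝ) ≤ k := Nat.cast_nonneg k
  linarith

lemma c_pos {μ : ℝ} (hμ : -1 < μ) (k : ℕ) : 0 < c μ k := by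
  have h1 : (0:ℝ) < k.factorial := by exact_mod_cast k.factorial_pos
  have h2 : 0 < Real.Gamma ((k : ℝ) + μ + 1) := Real.Gamma_pos_of_pos (arg_pos hμ k)
  exact div_pos one_pos (mul_pos h1 h2)

lemma c_rec {μ : ℝ} (hμ : -1 < μ) (k : ℕ) :
    c μ k = ((k : ℝ) + 1) * ((k : ℝ) + μ + 1) * c μ (k + 1) := by
  have h2 : 0 < Real.Gamma ((k : ℝ) + μ + 1) := Real.Gamma_pos_of_pos (arg_pos hμ k)
  have h1 : (0:ℝ) < k.factorial := by exact_mod_cast k.factorial_pos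
  have hG : Real.Gamma (((k+1 : ℕ) : ℝ) + μ + 1) = ((k : ℝ) + μ + 1) * Real.Gamma ((k:ℝ) + μ + 1) := by
    have h : ((k+1 : ℕ) : ℝ) + μ + 1 = ((k:ℝ) + μ + 1) + 1 := by push_cast; ring
    rw [h, Real.Gamma_add_one (ne_of_gt (arg_pos hμ k))]
  have hF : ((k+1 : ℕ).factorial : ℝ) = ((k:ℝ)+1) * k.factorial := by
    rw [Nat.factorial_succ]; push_cast; ring
  have hA := arg_pos hμ k
  unfold c
  rw [hG, hF]
  field_simp

lemma summable_master {μ : ℝ} (hμ : -1 < μ) {r : ℝ} (hr : 0 ≤ r) :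
    Summable (fun k : ℕ => ((k:ℝ)+1)^2 * r^k * c μ k) := by
  apply summable_of_ratio_norm_eventually_le (r := 1/2) (by norm_num)
  filter_upwards [Filter.eventually_ge_atTop (⌈8*r⌉₊ + ⌈-μ⌉₊ + 1)] with k hk
  have hk1 : (⌈8*r⌉₊ : ℕ) ≤ k := by omega
  have hk2 : (⌈-μ⌉₊ : ℕ) ≤ k := by omega
  have hk3 : (1:ℝ) ≤ (k:ℝ) := by exact_mod_cast Nat.one_le_iff_ne_zero.mpr (by omega)
  have hr8 : 8 * r ≤ (k:ℝ) := le_trans (Nat.le_ceil _) (by exact_mod_cast hk1)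
  have hμk : -μ ≤ (k:ℝ) := le_trans (Nat.le_ceil _) (by exact_mod_cast hk2)
  have hA : (1:ℝ) ≤ (k:ℝ) + μ + 1 := by linarith
  have hcpos := c_pos hμ (k+1)
  have hcpos0 := c_pos hμ k
  have hrk : (0:ℝ) ≤ r ^ k := pow_nonneg hr k
  have hpoly : ((k:ℝ)+2)^2 * r ≤ 1/2 * (((k:ℝ)+1)^3 * ((k:ℝ)+μ+1)) := by
    have hk0 : (0:ℝ) ≤ (k:ℝ) := Nat.cast_nonneg k
    have hcube : (k:ℝ)*((k:ℝ)+2)^2 ≤ 4*((k:ℝ)+1)^3 := by nlinarith [pow_nonneg hk0 3, sq_nonneg (k:ℝ)]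
    nlinarith [mul_nonneg (by positivity : (0:ℝ) ≤ ((k:ℝ)+1)^3) (by linarith : (0:ℝ) ≤ ((k:ℝ)+μ+1) - 1),
      mul_nonneg (by positivity : (0:ℝ) ≤ ((k:ℝ)+2)^2) (by linarith : (0:ℝ) ≤ (k:ℝ) - 8*r), hcube]
  have hterm : (((k+1:ℕ):ℝ)+1)^2 * r^(k+1) * c μ (k+1) ≤ 1/2 * (((k:ℝ)+1)^2 * r^k * c μ k) := by
    rw [c_rec hμ k]
    push_cast
    have h1 : (((k:ℝ)+2)^2 * r) * r^k ≤ (1/2 * (((k:ℝ)+1)^3 * ((k:ℝ)+μ+1))) * r^k :=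
      mul_le_mul_of_nonneg_right hpoly hrk
    calc ((k:ℝ)+1+1)^2 * r^(k+1) * c μ (k+1)
        = ((((k:ℝ)+2)^2 * r) * r^k) * c μ (k+1) := by rw [pow_succ]; ring
      _ ≤ ((1/2 * (((k:ℝ)+1)^3 * ((k:ℝ)+μ+1))) * r^k) * c μ (k+1) :=
          mul_le_mul_of_nonneg_right h1 hcpos.le
      _ = 1/2 * (((k:ℝ)+1)^2 * r^k * (((k:ℝ)+1) * ((k:ℝ)+μ+1) * c μ (k+1))) := by ring
  have hnn1 : (0:ℝ) ≤ (((k+1:ℕ):ℝ)+1)^2 * r^(k+1) * c μ (k+1) := by positivity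
  have hnn0 : (0:ℝ) ≤ ((k:ℝ)+1)^2 * r^k * c μ k := by positivity
  rw [Real.norm_of_nonneg hnn1, Real.norm_of_nonneg hnn0]
  exact_mod_cast hterm

lemma summable_aux {μ : ℝ} (hμ : -1 < μ) {w : ℝ} (hw : 0 ≤ w) {C : ℝ} {g : ℕ → ℝ}
    (hg : ∀ k, |g k| ≤ C * ((k:ℝ)+1)^2) :
    Summable (fun k : ℕ => g k * c μ k * w ^ k) := by
  refine Summable.of_norm_bounded ((summable_master hμ hw).mul_left C) (fun k => ?_)
  have hc := (c_pos hμ k).le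
  have hwk : (0:ℝ) ≤ w ^ k := pow_nonneg hw k
  have : ‖g k * c μ k * w ^ k‖ = |g k| * (c μ k * w ^ k) := by
    rw [norm_mul, norm_mul, Real.norm_of_nonneg hc, Real.norm_of_nonneg hwk, Real.norm_eq_abs, mul_assoc]
  rw [this]
  calc |g k| * (c μ k * w ^ k) ≤ (C * ((k:ℝ)+1)^2) * (c μ k * w ^ k) :=
        mul_le_mul_of_nonneg_right (hg k) (by positivity)
    _ = C * (((k:ℝ)+1)^2 * w ^ k * c μ k) := by ring

lemma summable_shift {μ : ℝ} (hμ : -1 < μ) {C : ℝ} {g : ℕ → ℝ}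
    (hg : ∀ k, |g k| ≤ C * ((k:ℝ)+1)^2) (v : ℝ) (j : ℕ) :
    Summable (fun k : ℕ => g k * c μ k * v ^ (2*k+j)) := by
  have h := (summable_aux hμ (sq_nonneg v) hg).mul_left (v ^ j)
  refine h.congr (fun k => ?_)
  simp only [pow_add, pow_mul]
  ring

end BesselAux

namespace BesselAux2
open BesselAux

/-- the entire function `f(w) = ∑ c_k w^k` -/
noncomputable def f (μ w : ℝ) : ℝ := ∑' k : ℕ, c μ k * w ^ k

/-- its derivative -/
noncomputable def fd (μ w : ℝ) : ℝ := ∑' k : ℕ, c μ k * ((k:ℝ) * w ^ (k-1))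

lemma g_one : ∀ k : ℕ, |(1:ℝ)| ≤ (1:ℝ) * ((k:ℝ)+1)^2 := by
  intro k
  have : (0:ℝ) ≤ (k:ℝ) := Nat.cast_nonneg k
  rw [abs_one]; nlinarith

lemma summable_f {μ : ℝ} (hμ : -1 < μ) {w : ℝ} (hw : 0 ≤ w) :
    Summable (fun k : ℕ => c μ k * w ^ k) := by
  have h := summable_aux hμ hw (g := fun _ => (1:ℝ)) g_one
  simpa using h

lemma hasDerivAt_f {μ : ℝ} (hμ : -1 < μ) (w : ℝ) : HasDerivAt (f μ) (fd μ w) w := by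
  set R : ℝ := |w| + 1 with hR
  have hR1 : 1 ≤ R := by have := abs_nonneg w; rw [hR]; linarith
  have hRpos : (0:ℝ) < R := by linarith
  have hu : Summable (fun k : ℕ => ((k:ℝ)+1)^2 * R ^ k * c μ k) := summable_master hμ (by linarith)
  refine hasDerivAt_tsum_of_isPreconnected hu (isOpen_Ioo (a := -R) (b := R))
      (convex_Ioo _ _).isPreconnected
      (g := fun k y => c μ k * y ^ k) (g' := fun k y => c μ k * ((k:ℝ) * y ^ (k-1)))
      (fun k y _ => ((hasDerivAt_pow k y).const_mul (c μ k))) (fun k y hy => ?_)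
      (show (0:ℝ) ∈ Set.Ioo (-R) R by constructor <;> [linarith; linarith])
      ?_ (show w ∈ Set.Ioo (-R) R by constructor <;> [linarith [neg_abs_le w]; linarith [le_abs_self w]])
  · have hc := (c_pos hμ k).le
    have hyR : |y| ≤ R := by
      rw [abs_le]; exact ⟨hy.1.le, hy.2.le⟩
    have h1 : |y| ^ (k-1) ≤ R ^ k := by
      calc |y| ^ (k-1) ≤ R ^ (k-1) := pow_le_pow_left₀ (abs_nonneg y) hyR _
        _ ≤ R ^ k := pow_le_pow_right₀ hR1 (Nat.sub_le k 1)
    have hknn : (0:ℝ) ≤ (k:ℝ) := Nat.cast_nonneg k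
    have h2 : (k:ℝ) ≤ ((k:ℝ)+1)^2 := by nlinarith
    calc ‖c μ k * ((k:ℝ) * y ^ (k-1))‖ = c μ k * ((k:ℝ) * |y| ^ (k-1)) := by
          rw [norm_mul, norm_mul, Real.norm_of_nonneg hc, Real.norm_of_nonneg hknn,
            norm_pow, Real.norm_eq_abs]
      _ ≤ c μ k * (((k:ℝ)+1)^2 * R ^ k) := by
          apply mul_le_mul_of_nonneg_left _ hc
          exact mul_le_mul h2 h1 (by positivity) (by positivity)
      _ = ((k:ℝ)+1)^2 * R ^ k * c μ k := by ring
  · exact summable_f hμ le_rfl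

lemma f_pos {μ : ℝ} (hμ : -1 < μ) {w : ℝ} (hw : 0 ≤ w) : 0 < f μ w := by
  have hs := summable_f hμ hw
  refine Summable.tsum_pos hs (fun k => ?_) 0 ?_
  · have := (c_pos hμ k).le
    positivity
  · simpa using c_pos hμ 0

end BesselAux2

namespace BesselAux3
open BesselAux BesselAux2

lemma bound_one : ∀ k : ℕ, |(1:ℝ)| ≤ (1:ℝ) * ((k:ℝ)+1)^2 := g_one

lemma bound_k : ∀ k : ℕ, |((k:ℕ):ℝ)| ≤ (1:ℝ) * ((k:ℝ)+1)^2 := by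
  intro k
  have h : (0:ℝ) ≤ (k:ℝ) := Nat.cast_nonneg k
  rw [abs_of_nonneg h]; nlinarith

lemma bound_m : ∀ k : ℕ, |((k-1:ℕ):ℝ)| ≤ (1:ℝ) * ((k:ℝ)+1)^2 := by
  intro k
  have h : (0:ℝ) ≤ ((k-1:ℕ):ℝ) := Nat.cast_nonneg _
  have h2 : ((k-1:ℕ):ℝ) ≤ (k:ℝ) := by exact_mod_cast Nat.cast_le.mpr (Nat.sub_le k 1)
  have h3 : (0:ℝ) ≤ (k:ℝ) := Nat.cast_nonneg k
  rw [abs_of_nonneg h]; nlinarith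

lemma summable_even {μ : ℝ} (hμ : -1 < μ) {C : ℝ} {g : ℕ → ℝ}
    (hg : ∀ k, |g k| ≤ C * ((k:ℝ)+1)^2) (v : ℝ) :
    Summable (fun k : ℕ => g k * c μ k * v ^ (2*k)) := by
  simpa using summable_shift hμ hg v 0

lemma summable_odd {μ : ℝ} (hμ : -1 < μ) {C : ℝ} {g : ℕ → ℝ}
    (hg : ∀ k, |g k| ≤ C * ((k:ℝ)+1)^2) (v : ℝ) :
    Summable (fun k : ℕ => g k * c μ k * v ^ (2*k+1)) := summable_shift hμ hg v 1

lemma f_even {μ : ℝ} (v : ℝ) : f μ (v^2) = ∑' k : ℕ, c μ k * v ^ (2*k) := by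
  refine tsum_congr (fun k => ?_)
  rw [pow_mul]

lemma fd_even {μ : ℝ} (v : ℝ) :
    v^2 * fd μ (v^2) = ∑' k : ℕ, (k:ℝ) * c μ k * v ^ (2*k) := by
  rw [fd, ← tsum_mul_left]
  refine tsum_congr (fun k => ?_)
  rcases k with _ | n
  · simp
  · have h1 : (n+1) - 1 = n := by omega
    rw [h1, pow_mul, pow_succ]
    push_cast
    ring

lemma A_eq {μ : ℝ} (v : ℝ) : (∑' k : ℕ, c μ k * v ^ (2*k+1)) = v * f μ (v^2) := by
  rw [f_even, ← tsum_mul_left]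
  refine tsum_congr (fun k => ?_)
  rw [pow_succ]
  ring

lemma key_upper {μ : ℝ} (hμ : -1 < μ) {v : ℝ} (hv : 0 < v) :
    v^2 * fd μ (v^2) < (1+v) * f μ (v^2) := by
  have hv' : (0:ℝ) ≤ v := hv.le
  have hbm2 : ∀ k : ℕ, |((k-1:ℕ):ℝ)^2| ≤ (1:ℝ) * ((k:ℝ)+1)^2 := by
    intro k
    have h2 : ((k-1:ℕ):ℝ) ≤ (k:ℝ) := by exact_mod_cast Nat.cast_le.mpr (Nat.sub_le k 1)
    have h : (0:ℝ) ≤ ((k-1:ℕ):ℝ) := Nat.cast_nonneg _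
    rw [abs_of_nonneg (by positivity)]
    nlinarith
  -- summability facts
  have Sf : Summable (fun k : ℕ => c μ k * v ^ (2*k)) := by
    simpa using summable_even hμ bound_one v
  have Sk : Summable (fun k : ℕ => (k:ℝ) * c μ k * v ^ (2*k)) := summable_even hμ bound_k v
  have Sm : Summable (fun k : ℕ => ((k-1:ℕ):ℝ) * c μ k * v ^ (2*k)) := summable_even hμ bound_m v
  have SA : Summable (fun k : ℕ => c μ k * v ^ (2*k+1)) := by
    simpa using summable_odd hμ bound_one v
  have SB : Summable (fun k : ℕ => ((k-1:ℕ):ℝ)^2 * c μ k * v ^ (2*k-1)) := by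
    refine ((summable_even hμ hbm2 v).mul_left v⁻¹).congr (fun k => ?_)
    rcases k with _ | n
    · simp
    · have hh : 2*(n+1) = (2*(n+1)-1)+1 := by omega
      have h1 : v ^ (2*(n+1)) = v ^ (2*(n+1)-1) * v := by
        conv_lhs => rw [hh]
        rw [pow_succ]
      rw [h1]
      field_simp
  -- step 1
  have hterm1 : ∀ k : ℕ, (k:ℝ) * c μ k * v ^ (2*k) ≤
      c μ k * v ^ (2*k) + ((k-1:ℕ):ℝ) * c μ k * v ^ (2*k) := by
    intro k
    rcases k with _ | n
    · have h0 := (c_pos hμ 0).le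
      simp
      linarith
    · have h1 : (((n+1:ℕ)):ℝ) = 1 + ((n+1-1:ℕ):ℝ) := by
        have : n+1-1 = n := by omega
        rw [this]; push_cast; ring
      rw [h1]; ring_nf
      exact le_refl _
  have step1 : (∑' k : ℕ, (k:ℝ) * c μ k * v ^ (2*k)) <
      (∑' k : ℕ, c μ k * v ^ (2*k)) + ∑' k : ℕ, ((k-1:ℕ):ℝ) * c μ k * v ^ (2*k) := by
    have h := Summable.tsum_lt_tsum (i := 0) hterm1 ?_ Sk (Sf.add Sm)
    · rw [Summable.tsum_add Sf Sm] at h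
      exact h
    · have hc := c_pos hμ 0
      simp
      linarith
  -- step 3 : E ≤ ½ A + ½ B
  have hterm3 : ∀ k : ℕ, ((k-1:ℕ):ℝ) * c μ k * v ^ (2*k) ≤
      1/2 * (c μ k * v ^ (2*k+1)) + 1/2 * (((k-1:ℕ):ℝ)^2 * c μ k * v ^ (2*k-1)) := by
    intro k
    rcases k with _ | n
    · have h0 := (c_pos hμ 0).le
      have h0' : (0:ℝ) ≤ v := hv.le
      simp
      positivity
    · have hc := c_pos hμ (n+1)
      have h1 : (n+1) - 1 = n := by omega
      have h2 : 2*(n+1) - 1 = 2*n+1 := by omega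
      have ee1 : 2*(n+1) = (2*n+1)+1 := by omega
      have ee2 : 2*(n+1)+1 = (2*n+1)+2 := by omega
      have e1 : v ^ (2*(n+1)) = v ^ (2*n+1) * v := by rw [ee1, pow_succ]
      have e2 : v ^ (2*(n+1)+1) = v ^ (2*n+1) * v^2 := by rw [ee2, pow_add]
      rw [h1, h2, e1, e2]
      have hp : (0:ℝ) ≤ v ^ (2*n+1) := by positivity
      nlinarith [mul_nonneg (mul_nonneg hc.le hp) (sq_nonneg (v - (n:ℝ)))]
  have step3 : (∑' k : ℕ, ((k-1:ℕ):ℝ) * c μ k * v ^ (2*k)) ≤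
      1/2 * (∑' k : ℕ, c μ k * v ^ (2*k+1)) +
      1/2 * (∑' k : ℕ, ((k-1:ℕ):ℝ)^2 * c μ k * v ^ (2*k-1)) := by
    have h := Summable.tsum_le_tsum hterm3 Sm ((SA.mul_left _).add (SB.mul_left _))
    rwa [Summable.tsum_add (SA.mul_left _) (SB.mul_left _), tsum_mul_left, tsum_mul_left] at h
  -- step 4 : B ≤ A
  have hterm4 : ∀ n : ℕ, ((n+1-1:ℕ):ℝ)^2 * c μ (n+1) * v ^ (2*(n+1)-1) ≤
      c μ n * v ^ (2*n+1) := by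
    intro n
    have hc := c_pos hμ (n+1)
    have hn : (0:ℝ) ≤ (n:ℝ) := Nat.cast_nonneg n
    have h1 : (n+1) - 1 = n := by omega
    have h2 : 2*(n+1) - 1 = 2*n+1 := by omega
    rw [h1, h2, c_rec hμ n]
    have hpoly : ((n:ℝ))^2 ≤ ((n:ℝ)+1) * ((n:ℝ)+μ+1) := by
      nlinarith [mul_nonneg hn (by linarith : (0:ℝ) ≤ μ + 1)]
    have := mul_le_mul_of_nonneg_right (mul_le_mul_of_nonneg_right hpoly hc.le)
      (by positivity : (0:ℝ) ≤ v ^ (2*n+1))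
    calc ((n:ℝ))^2 * c μ (n+1) * v ^ (2*n+1) = ((n:ℝ))^2 * c μ (n+1) * v ^ (2*n+1) := rfl
      _ ≤ ((n:ℝ)+1) * ((n:ℝ)+μ+1) * c μ (n+1) * v ^ (2*n+1) := by
          nlinarith [this]
  have step4 : (∑' k : ℕ, ((k-1:ℕ):ℝ)^2 * c μ k * v ^ (2*k-1)) ≤
      ∑' k : ℕ, c μ k * v ^ (2*k+1) := by
    set Bf : ℕ → ℝ := fun k => ((k-1:ℕ):ℝ)^2 * c μ k * v ^ (2*k-1) with hBf
    have hshift : Summable (fun n : ℕ => Bf (n+1)) := (summable_nat_add_iff 1).mpr SB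
    have h1 : (∑' n : ℕ, Bf (n+1)) ≤ ∑' n : ℕ, c μ n * v ^ (2*n+1) :=
      Summable.tsum_le_tsum (fun n => hterm4 n) hshift SA
    have h0 : Bf 0 = 0 := by simp [hBf]
    calc (∑' k : ℕ, Bf k) = Bf 0 + ∑' n : ℕ, Bf (n+1) := Summable.tsum_eq_zero_add SB
      _ = ∑' n : ℕ, Bf (n+1) := by rw [h0, zero_add]
      _ ≤ ∑' n : ℕ, c μ n * v ^ (2*n+1) := h1
  -- combine
  rw [fd_even, f_even]
  have hAf : (∑' k : ℕ, c μ k * v ^ (2*k+1)) = v * ∑' k : ℕ, c μ k * v ^ (2*k) := by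
    rw [← f_even, A_eq, f_even]
  rw [hAf] at step3 step4
  nlinarith [step1, step3, step4]

end BesselAux3

namespace BesselAux4
open BesselAux BesselAux2 BesselAux3

lemma key_lower {μ : ℝ} (hμ : -1 < μ) {v : ℝ} (hv : 0 < v) :
    v * f μ (v^2) < v^2 * fd μ (v^2) + (μ+2) * f μ (v^2) := by
  have hv' : (0:ℝ) ≤ v := hv.le
  have habs : (0:ℝ) ≤ |μ| := abs_nonneg μ
  have hμ1 : (0:ℝ) < μ + 1 := by linarith
  have bound_g1 : ∀ k : ℕ, |((k:ℝ)+μ+2)| ≤ (|μ|+3) * ((k:ℝ)+1)^2 := by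
    intro k
    have hk : (0:ℝ) ≤ (k:ℝ) := Nat.cast_nonneg k
    have h1 : |((k:ℝ)+μ+2)| ≤ ((k:ℝ)+2) + |μ| := by
      have := abs_add_le ((k:ℝ)+2) μ
      have h2 : |((k:ℝ)+2)| = (k:ℝ)+2 := abs_of_nonneg (by linarith)
      calc |((k:ℝ)+μ+2)| = |((k:ℝ)+2) + μ| := by ring_nf
        _ ≤ |((k:ℝ)+2)| + |μ| := abs_add_le _ _
        _ = ((k:ℝ)+2) + |μ| := by rw [h2]
    have e1 : (1:ℝ) ≤ ((k:ℝ)+1)^2 := by nlinarith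
    have e2 : (k:ℝ)+1 ≤ ((k:ℝ)+1)^2 := by nlinarith
    have h3 : ((k:ℝ)+2) + |μ| ≤ (|μ|+3) * ((k:ℝ)+1)^2 := by
      nlinarith [mul_le_mul_of_nonneg_left e1 habs]
    linarith
  have bound_g2 : ∀ k : ℕ, |1/((k:ℝ)+μ+2)| ≤ (1:ℝ) * ((k:ℝ)+1)^2 := by
    intro k
    have hk : (0:ℝ) ≤ (k:ℝ) := Nat.cast_nonneg k
    have hT : (1:ℝ) < (k:ℝ)+μ+2 := by linarith
    have h1 : |1/((k:ℝ)+μ+2)| = 1/((k:ℝ)+μ+2) := abs_of_nonneg (by positivity)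
    rw [h1]
    have h2 : 1/((k:ℝ)+μ+2) ≤ 1 := by
      rw [div_le_one (by linarith)]; linarith
    nlinarith
  -- summability
  have Sf : Summable (fun k : ℕ => c μ k * v ^ (2*k)) := by
    simpa using summable_even hμ bound_one v
  have Sk : Summable (fun k : ℕ => (k:ℝ) * c μ k * v ^ (2*k)) := summable_even hμ bound_k v
  have SA : Summable (fun k : ℕ => c μ k * v ^ (2*k+1)) := by
    simpa using summable_odd hμ bound_one v
  have SS1 : Summable (fun k : ℕ => ((k:ℝ)+μ+2) * c μ k * v ^ (2*k)) :=
    summable_even hμ bound_g1 v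
  have SS2 : Summable (fun k : ℕ => 1/((k:ℝ)+μ+2) * c μ k * v ^ (2*k+2)) :=
    summable_shift hμ bound_g2 v 2
  -- termwise AM-GM
  have hterm1 : ∀ k : ℕ, c μ k * v ^ (2*k+1) ≤
      1/2 * (((k:ℝ)+μ+2) * c μ k * v ^ (2*k)) + 1/2 * (1/((k:ℝ)+μ+2) * c μ k * v ^ (2*k+2)) := by
    intro k
    have hk : (0:ℝ) ≤ (k:ℝ) := Nat.cast_nonneg k
    set T : ℝ := (k:ℝ)+μ+2 with hT
    have hTpos : 0 < T := by rw [hT]; linarith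
    have hc := c_pos hμ k
    have hp1 : v ^ (2*k+1) = v ^ (2*k) * v := by rw [pow_succ]
    have hp3 : v ^ (2*k+2) = v ^ (2*k) * v^2 := by rw [pow_add]
    have hv1 : v ≤ (T^2+v^2)/(2*T) := by
      rw [le_div_iff₀ (by positivity)]
      nlinarith [sq_nonneg (T-v)]
    have h3 := mul_le_mul_of_nonneg_left hv1
      (by positivity : (0:ℝ) ≤ c μ k * v ^ (2*k))
    calc c μ k * v ^ (2*k+1) = (c μ k * v ^ (2*k)) * v := by rw [hp1]; ring
      _ ≤ (c μ k * v ^ (2*k)) * ((T^2+v^2)/(2*T)) := h3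
      _ = 1/2 * (T * c μ k * v ^ (2*k)) + 1/2 * (1/T * c μ k * v ^ (2*k+2)) := by
          rw [hp3]
          field_simp
  -- shifted comparison for the second sum
  have hterm2 : ∀ k : ℕ, 1/((k:ℝ)+μ+2) * c μ k * v ^ (2*k+2) ≤
      (((k+1:ℕ):ℝ)+μ+2) * c μ (k+1) * v ^ (2*(k+1)) := by
    intro k
    have hk : (0:ℝ) ≤ (k:ℝ) := Nat.cast_nonneg k
    have hc1 := c_pos hμ (k+1)
    have hTpos : (0:ℝ) < (k:ℝ)+μ+2 := by linarith
    have he : 2*(k+1) = 2*k+2 := by omega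
    rw [he]
    have hcoef : 1/((k:ℝ)+μ+2) * c μ k ≤ (((k+1:ℕ):ℝ)+μ+2) * c μ (k+1) := by
      rw [c_rec hμ k]
      push_cast
      rw [div_mul_eq_mul_div, div_le_iff₀ hTpos]
      have hineq : ((k:ℝ)+1) * ((k:ℝ)+μ+1) ≤ ((k:ℝ)+μ+3) * ((k:ℝ)+μ+2) := by
        nlinarith [mul_nonneg hk (by linarith : (0:ℝ) ≤ μ+2), sq_nonneg (μ+2)]
      nlinarith [hc1, hineq, mul_le_mul_of_nonneg_right hineq hc1.le]
    have := mul_le_mul_of_nonneg_right hcoef (by positivity : (0:ℝ) ≤ v ^ (2*k+2))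
    calc 1/((k:ℝ)+μ+2) * c μ k * v ^ (2*k+2) = (1/((k:ℝ)+μ+2) * c μ k) * v ^ (2*k+2) := by ring
      _ ≤ ((((k+1:ℕ):ℝ)+μ+2) * c μ (k+1)) * v ^ (2*k+2) := this
      _ = (((k+1:ℕ):ℝ)+μ+2) * c μ (k+1) * v ^ (2*k+2) := by ring
  -- assemble
  set S1f : ℕ → ℝ := fun k => ((k:ℝ)+μ+2) * c μ k * v ^ (2*k) with hS1f
  have hshift : Summable (fun n : ℕ => S1f (n+1)) := (summable_nat_add_iff 1).mpr SS1
  have hsum2 : (∑' k : ℕ, 1/((k:ℝ)+μ+2) * c μ k * v ^ (2*k+2)) ≤ ∑' n : ℕ, S1f (n+1) :=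
    Summable.tsum_le_tsum hterm2 SS2 hshift
  have hS1split : (∑' k : ℕ, S1f k) = S1f 0 + ∑' n : ℕ, S1f (n+1) := Summable.tsum_eq_zero_add SS1
  have hS10 : S1f 0 = (μ+2) * c μ 0 := by simp [hS1f]
  have hc0 := c_pos hμ 0
  have hA : (∑' k : ℕ, c μ k * v ^ (2*k+1)) ≤
      1/2 * (∑' k : ℕ, S1f k) + 1/2 * (∑' k : ℕ, 1/((k:ℝ)+μ+2) * c μ k * v ^ (2*k+2)) := by
    have h := Summable.tsum_le_tsum hterm1 SA ((SS1.mul_left _).add (SS2.mul_left _))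
    rwa [Summable.tsum_add (SS1.mul_left _) (SS2.mul_left _), tsum_mul_left, tsum_mul_left] at h
  have hAS1 : (∑' k : ℕ, c μ k * v ^ (2*k+1)) < ∑' k : ℕ, S1f k := by
    have h1 : (∑' k : ℕ, 1/((k:ℝ)+μ+2) * c μ k * v ^ (2*k+2)) ≤
        (∑' k : ℕ, S1f k) - (μ+2) * c μ 0 := by
      rw [hS1split, hS10]
      linarith [hsum2]
    have h2 : (0:ℝ) < (μ+2) * c μ 0 := mul_pos (by linarith) hc0
    linarith [hA, h1]
  -- translate to statement
  have hS1eq : (∑' k : ℕ, S1f k) =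
      (∑' k : ℕ, (k:ℝ) * c μ k * v ^ (2*k)) + (μ+2) * ∑' k : ℕ, c μ k * v ^ (2*k) := by
    rw [← tsum_mul_left, ← Summable.tsum_add Sk (Sf.mul_left (μ+2))]
    refine tsum_congr (fun k => ?_)
    simp only [hS1f]
    ring
  rw [hS1eq] at hAS1
  have e1 : v * f μ (v^2) = ∑' k : ℕ, c μ k * v ^ (2*k+1) := (A_eq v).symm
  have e2 : v^2 * fd μ (v^2) = ∑' k : ℕ, (k:ℝ) * c μ k * v ^ (2*k) := fd_even v
  have e3 : f μ (v^2) = ∑' k : ℕ, c μ k * v ^ (2*k) := f_even v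
  rw [e1, e2, e3]
  exact hAS1

end BesselAux4

namespace BesselAux5
open BesselAux BesselAux2 BesselAux3 BesselAux4

lemma hasDerivAt_sq (s : ℝ) : HasDerivAt (fun x : ℝ => x^2) (2*s) s := by
  simpa using hasDerivAt_pow 2 s

lemma hasDerivAt_fsq {μ : ℝ} (hμ : -1 < μ) (s : ℝ) :
    HasDerivAt (fun x : ℝ => f μ (x^2)) (fd μ (s^2) * (2*s)) s :=
  (hasDerivAt_f hμ (s^2)).comp (h := fun x : ℝ => x^2) s (hasDerivAt_sq s)

lemma hasDerivAt_expneg (s : ℝ) :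
    HasDerivAt (fun x : ℝ => Real.exp (-2*x)) (Real.exp (-2*s) * (-2)) s := by
  have h : HasDerivAt (fun x : ℝ => -2*x) (-2) s := by
    simpa using (hasDerivAt_id s).const_mul (-2:ℝ)
  exact HasDerivAt.exp h

lemma gU_anti {μ : ℝ} (hμ : -1 < μ) :
    StrictAntiOn (fun s : ℝ => f μ (s^2) * Real.exp (-2*s) / s^2) (Set.Ioi 0) := by
  have hD : ∀ s ∈ Set.Ioi (0:ℝ), HasDerivAt (fun s : ℝ => f μ (s^2) * Real.exp (-2*s) / s^2)
      (((fd μ (s^2) * (2*s) * Real.exp (-2*s) + f μ (s^2) * (Real.exp (-2*s) * (-2))) * s^2 -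
        f μ (s^2) * Real.exp (-2*s) * (2*s)) / (s^2)^2) s := by
    intro s hs
    have hs0 : (0:ℝ) < s := hs
    exact ((hasDerivAt_fsq hμ s).mul (hasDerivAt_expneg s)).div (hasDerivAt_sq s)
      (by positivity)
  have hneg : ∀ s ∈ Set.Ioi (0:ℝ),
      ((fd μ (s^2) * (2*s) * Real.exp (-2*s) + f μ (s^2) * (Real.exp (-2*s) * (-2))) * s^2 -
        f μ (s^2) * Real.exp (-2*s) * (2*s)) / (s^2)^2 < 0 := by
    intro s hs
    have hs0 : (0:ℝ) < s := hs
    apply div_neg_of_neg_of_pos _ (by positivity)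
    have hk := key_upper hμ hs0
    have he := Real.exp_pos (-2*s)
    have hfac : (0:ℝ) < 2*s*Real.exp (-2*s) := by positivity
    nlinarith [mul_lt_mul_of_pos_left hk hfac]
  apply strictAntiOn_of_deriv_neg (convex_Ioi (0:ℝ))
  · intro x hx
    have hx0 : (0:ℝ) < x := hx
    exact ((hD x hx0).differentiableAt).continuousAt.continuousWithinAt
  · intro x hx
    rw [interior_Ioi] at hx
    rw [(hD x hx).deriv]
    exact hneg x hx

lemma gL_mono {μ : ℝ} (hμ : -1 < μ) :
    StrictMonoOn (fun s : ℝ => f μ (s^2) * Real.exp (-2*s) * s^(2*μ+4)) (Set.Ioi 0) := by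
  have hD : ∀ s ∈ Set.Ioi (0:ℝ), HasDerivAt (fun s : ℝ => f μ (s^2) * Real.exp (-2*s) * s^(2*μ+4))
      ((fd μ (s^2) * (2*s) * Real.exp (-2*s) + f μ (s^2) * (Real.exp (-2*s) * (-2))) * s^(2*μ+4) +
        f μ (s^2) * Real.exp (-2*s) * ((2*μ+4) * s^(2*μ+4-1))) s := by
    intro s hs
    have hs0 : (0:ℝ) < s := hs
    exact ((hasDerivAt_fsq hμ s).mul (hasDerivAt_expneg s)).mul
      (Real.hasDerivAt_rpow_const (Or.inl hs0.ne'))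
  have hpos : ∀ s ∈ Set.Ioi (0:ℝ),
      0 < (fd μ (s^2) * (2*s) * Real.exp (-2*s) + f μ (s^2) * (Real.exp (-2*s) * (-2))) * s^(2*μ+4) +
        f μ (s^2) * Real.exp (-2*s) * ((2*μ+4) * s^(2*μ+4-1)) := by
    intro s hs
    have hs0 : (0:ℝ) < s := hs
    have he1 : (2*μ+4-1 : ℝ) = 2*μ+3 := by ring
    have he2 : s^(2*μ+4 : ℝ) = s^(2*μ+3 : ℝ) * s := by
      rw [show (2*μ+4 : ℝ) = (2*μ+3)+1 by ring, Real.rpow_add hs0, Real.rpow_one]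
    rw [he1, he2]
    have hk := key_lower hμ hs0
    have he := Real.exp_pos (-2*s)
    have hP : (0:ℝ) < s^(2*μ+3 : ℝ) := Real.rpow_pos_of_pos hs0 _
    have hfac : (0:ℝ) < 2 * Real.exp (-2*s) * s^(2*μ+3 : ℝ) := by positivity
    nlinarith [mul_lt_mul_of_pos_left hk hfac]
  apply strictMonoOn_of_deriv_pos (convex_Ioi (0:ℝ))
  · intro x hx
    have hx0 : (0:ℝ) < x := hx
    exact ((hD x hx0).differentiableAt).continuousAt.continuousWithinAt
  · intro x hx
    rw [interior_Ioi] at hx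
    rw [(hD x hx).deriv]
    exact hpos x hx

end BesselAux5

namespace BesselAux6
open BesselAux BesselAux2 BesselAux3 BesselAux4 BesselAux5

lemma f_ratio {μ : ℝ} (hμ : -1 < μ) {p q : ℝ} (hp : 0 < p) (hpq : p < q) :
    (p/q)^(2*μ+4 : ℝ) * Real.exp (2*(q-p)) * f μ (p^2) < f μ (q^2) ∧
    f μ (q^2) < (q/p)^(2:ℕ) * Real.exp (2*(q-p)) * f μ (p^2) := by
  have hq : 0 < q := lt_trans hp hpq
  have hfp : 0 < f μ (p^2) := f_pos hμ (sq_nonneg p)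
  have hfq : 0 < f μ (q^2) := f_pos hμ (sq_nonneg q)
  have hep := Real.exp_pos (-2*p)
  have heq := Real.exp_pos (-2*q)
  constructor
  · -- lower bound from gL_mono
    have hb := gL_mono hμ (Set.mem_Ioi.mpr hp) (Set.mem_Ioi.mpr hq) hpq
    simp only at hb
    -- hb : f μ (p^2) * exp (-2p) * p^(2μ+4) < f μ (q^2) * exp (-2q) * q^(2μ+4)
    have hK : (0:ℝ) < Real.exp (-2*q) * q^(2*μ+4 : ℝ) :=
      mul_pos heq (Real.rpow_pos_of_pos hq _)
    have hr2 : (((p/q)^(2*μ+4 : ℝ) * Real.exp (2*(q-p)) * f μ (p^2))) * (Real.exp (-2*q) * q^(2*μ+4 : ℝ))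
        = f μ (p^2) * Real.exp (-2*p) * p^(2*μ+4 : ℝ) := by
      rw [Real.div_rpow hp.le hq.le,
        show (2*(q-p) : ℝ) = -2*p - (-2*q) by ring, Real.exp_sub]
      have hqr : q^(2*μ+4 : ℝ) ≠ 0 := (Real.rpow_pos_of_pos hq _).ne'
      field_simp
    nlinarith [hb, hr2, hK, mul_lt_mul_of_pos_right hb hK]
  · -- upper bound from gU_anti
    have ha := gU_anti hμ (Set.mem_Ioi.mpr hp) (Set.mem_Ioi.mpr hq) hpq
    simp only at ha
    -- ha : f μ (q^2) * exp (-2q) / q^2 < f μ (p^2) * exp (-2p) / p^2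
    have ha' : f μ (q^2) * Real.exp (-2*q) * p^2 < f μ (p^2) * Real.exp (-2*p) * q^2 :=
      (div_lt_div_iff₀ (by positivity) (by positivity)).mp ha
    have hK : (0:ℝ) < Real.exp (-2*q) * p^2 := by positivity
    have hr : ((q/p)^(2:ℕ) * Real.exp (2*(q-p)) * f μ (p^2)) * (Real.exp (-2*q) * p^2)
        = f μ (p^2) * Real.exp (-2*p) * q^2 := by
      rw [show (2*(q-p) : ℝ) = -2*p - (-2*q) by ring, Real.exp_sub, div_pow]
      field_simp
    nlinarith [ha', hr, hK]

end BesselAux6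

namespace BesselAux7
open BesselAux BesselAux2 BesselAux3 BesselAux4 BesselAux5 BesselAux6

lemma besselI_eq {μ : ℝ} (hμ : -1 < μ) {z : ℝ} (hz : 0 < z) :
    besselI μ z = (z/2) ^ (μ:ℝ) * f μ ((z/2)^2) := by
  unfold besselI f
  rw [← tsum_mul_left]
  refine tsum_congr (fun k => ?_)
  have hz2 : (0:ℝ) < z/2 := by linarith
  have h1 : (z/2) ^ (μ + 2*(k:ℝ)) = (z/2)^(μ:ℝ) * ((z/2)^2)^k := by
    rw [Real.rpow_add hz2, show (2*(k:ℝ)) = ((2*k : ℕ):ℝ) by push_cast; ring,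
      Real.rpow_natCast, pow_mul]
  rw [h1, c]
  have h2 : ((k.factorial : ℝ) * Real.Gamma ((k:ℝ) + μ + 1)) ≠ 0 := by
    have hf : (0:ℝ) < k.factorial := by exact_mod_cast k.factorial_pos
    have hG : 0 < Real.Gamma ((k:ℝ) + μ + 1) := by
      apply Real.Gamma_pos_of_pos
      have : (0:ℝ) ≤ (k:ℝ) := Nat.cast_nonneg k
      linarith
    positivity
  field_simp

lemma density_eq {μ t x b : ℝ} (hμ : -1 < μ) (ht : 0 < t) (hx : 0 < x) (hb : 0 < b) :
    besselDensity μ t x b =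
      ((1 / (2*t)) * ((2*t) ^ (μ:ℝ))⁻¹) * Real.exp (-(x^2+b^2)/(2*t)) * f μ ((x*b/(2*t))^2) := by
  unfold besselDensity
  have hxb : (0:ℝ) < x*b := mul_pos hx hb
  have ht2 : (0:ℝ) < 2*t := by linarith
  rw [besselI_eq hμ (by positivity : (0:ℝ) < x*b/t)]
  have h1 : x*b/t/2 = x*b/(2*t) := by ring
  rw [h1]
  have h2 : (x*b/(2*t)) ^ (μ:ℝ) = (x*b)^(μ:ℝ) / (2*t)^(μ:ℝ) := Real.div_rpow hxb.le ht2.le μ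
  have h3 : (x*b) ^ (-μ:ℝ) = ((x*b)^(μ:ℝ))⁻¹ := Real.rpow_neg hxb.le μ
  rw [h2, h3]
  have h4 : ((x*b)^(μ:ℝ)) ≠ 0 := (Real.rpow_pos_of_pos hxb μ).ne'
  have h5 : ((2*t)^(μ:ℝ)) ≠ 0 := (Real.rpow_pos_of_pos ht2 μ).ne'
  field_simp

end BesselAux7

open BesselAux BesselAux2 BesselAux3 BesselAux4 BesselAux5 BesselAux6 BesselAux7 in
theorem density_ratio_reflected (μ t x y : ℝ) (hμ : -1 < μ) (ht : 0 < t)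
    (hx1 : 0 < x) (hx2 : x < 1) (hy1 : 1/2 < y) (hy2 : y < 1) :
    (y / (2 - y)) ^ (2 * μ + 4) * Real.exp (-(2 * (1 - x) * (1 - y)) / t) <
      besselDensity μ t x (2 - y) / besselDensity μ t x y ∧
    besselDensity μ t x (2 - y) / besselDensity μ t x y <
      ((2 - y) / y) ^ (2 : ℕ) * Real.exp (-(2 * (1 - x) * (1 - y)) / t) := by
  have hb' : (0:ℝ) < 2 - y := by linarith
  have hy0 : (0:ℝ) < y := by linarith
  have ht2 : (0:ℝ) < 2*t := by linarith
  have htne : t ≠ 0 := ht.ne'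
  have hxne : x ≠ 0 := hx1.ne'
  have hyne : y ≠ 0 := hy0.ne'
  have hbne : (2 - y) ≠ 0 := hb'.ne'
  have hsa0 : (0:ℝ) < x*y/(2*t) := by positivity
  have hsab : x*y/(2*t) < x*(2-y)/(2*t) := by
    rw [div_lt_div_iff₀ ht2 ht2]
    nlinarith [mul_pos (mul_pos hx1 ht2) (by linarith : (0:ℝ) < 2-2*y)]
  have hratio := f_ratio hμ hsa0 hsab
  have hfa : 0 < f μ ((x*y/(2*t))^2) := f_pos hμ (sq_nonneg _)
  have hfb : 0 < f μ ((x*(2-y)/(2*t))^2) := f_pos hμ (sq_nonneg _)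
  have hrp := Real.rpow_pos_of_pos ht2 μ
  have hC : (0:ℝ) < (1/(2*t)) * ((2*t)^(μ:ℝ))⁻¹ := by positivity
  have hDA : besselDensity μ t x (2-y) = ((1/(2*t)) * ((2*t)^(μ:ℝ))⁻¹) *
      Real.exp (-(x^2+(2-y)^2)/(2*t)) * f μ ((x*(2-y)/(2*t))^2) := density_eq hμ ht hx1 hb'
  have hDB : besselDensity μ t x y = ((1/(2*t)) * ((2*t)^(μ:ℝ))⁻¹) *
      Real.exp (-(x^2+y^2)/(2*t)) * f μ ((x*y/(2*t))^2) := density_eq hμ ht hx1 hy0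
  have hBD0 : 0 < besselDensity μ t x y := by
    rw [hDB]; exact mul_pos (mul_pos hC (Real.exp_pos _)) hfa
  have hbase1 : (x*y/(2*t))/(x*(2-y)/(2*t)) = y/(2-y) := by
    field_simp
  have hbase2 : (x*(2-y)/(2*t))/(x*y/(2*t)) = (2-y)/y := by
    field_simp
  have hexp : Real.exp (2*((x*(2-y)/(2*t)) - x*y/(2*t))) * Real.exp (-(x^2+(2-y)^2)/(2*t)) =
      Real.exp (-(2*(1-x)*(1-y))/t) * Real.exp (-(x^2+y^2)/(2*t)) := by
    rw [← Real.exp_add, ← Real.exp_add]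
    congr 1
    field_simp
    ring
  have hEb := Real.exp_pos (-(x^2+(2-y)^2)/(2*t))
  have hEy := Real.exp_pos (-(x^2+y^2)/(2*t))
  have hCEb : (0:ℝ) < ((1/(2*t)) * ((2*t)^(μ:ℝ))⁻¹) * Real.exp (-(x^2+(2-y)^2)/(2*t)) :=
    mul_pos hC hEb
  constructor
  · rw [lt_div_iff₀ hBD0, hDA, hDB]
    have h1 := hratio.1
    rw [hbase1] at h1
    have h2 := mul_lt_mul_of_pos_left h1 hCEb
    calc (y/(2-y))^(2*μ+4 : ℝ) * Real.exp (-(2*(1-x)*(1-y))/t) *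
          (((1/(2*t)) * ((2*t)^(μ:ℝ))⁻¹) * Real.exp (-(x^2+y^2)/(2*t)) * f μ ((x*y/(2*t))^2))
        = (((1/(2*t)) * ((2*t)^(μ:ℝ))⁻¹) * Real.exp (-(x^2+(2-y)^2)/(2*t))) *
          ((y/(2-y))^(2*μ+4 : ℝ) * Real.exp (2*((x*(2-y)/(2*t)) - x*y/(2*t))) * f μ ((x*y/(2*t))^2)) := by
          linear_combination (-((y/(2-y))^(2*μ+4 : ℝ) * ((1/(2*t)) * ((2*t)^(μ:ℝ))⁻¹) *
            f μ ((x*y/(2*t))^2))) * hexp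
      _ < (((1/(2*t)) * ((2*t)^(μ:ℝ))⁻¹) * Real.exp (-(x^2+(2-y)^2)/(2*t))) *
          f μ ((x*(2-y)/(2*t))^2) := h2
      _ = ((1/(2*t)) * ((2*t)^(μ:ℝ))⁻¹) * Real.exp (-(x^2+(2-y)^2)/(2*t)) *
          f μ ((x*(2-y)/(2*t))^2) := by ring
  · rw [div_lt_iff₀ hBD0, hDA, hDB]
    have h1 := hratio.2
    rw [hbase2] at h1
    have h2 := mul_lt_mul_of_pos_left h1 hCEb
    calc ((1/(2*t)) * ((2*t)^(μ:ℝ))⁻¹) * Real.exp (-(x^2+(2-y)^2)/(2*t)) *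
          f μ ((x*(2-y)/(2*t))^2)
        = (((1/(2*t)) * ((2*t)^(μ:ℝ))⁻¹) * Real.exp (-(x^2+(2-y)^2)/(2*t))) *
          f μ ((x*(2-y)/(2*t))^2) := by ring
      _ < (((1/(2*t)) * ((2*t)^(μ:ℝ))⁻¹) * Real.exp (-(x^2+(2-y)^2)/(2*t))) *
          (((2-y)/y)^(2:ℕ) * Real.exp (2*((x*(2-y)/(2*t)) - x*y/(2*t))) * f μ ((x*y/(2*t))^2)) := h2
      _ = ((2-y)/y)^(2:ℕ) * Real.exp (-(2*(1-x)*(1-y))/t) *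
          (((1/(2*t)) * ((2*t)^(μ:ℝ))⁻¹) * Real.exp (-(x^2+y^2)/(2*t)) * f μ ((x*y/(2*t))^2)) := by
          linear_combination (((2-y)/y)^(2:ℕ) * ((1/(2*t)) * ((2*t)^(μ:ℝ))⁻¹) *
            f μ ((x*y/(2*t))^2)) * hexp
end
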